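/- arXiv:0807.4501 — 2 statements merged into one kernel-verified Lean document; each statement's English description precedes it below -/
import Mathlib

section
/- If f = K_μ for some complex Borel measure μ on the unit circle T, i.e. f(z) = ∫_T (1/(ξ - z) - ξ/(1 - ξz)) dμ(ξ), then the function (f ∘ φ_a) · φ_a' also belongs to the class K, where φ_a(z) = (z + a)/(1 + za) for real a with -1 < a < 1. -/
open MeasureTheory Metric Complex

/-- The Cauchy-type kernel `1/(ξ - z) - ξ/(1 - ξ z)`. -/
noncomputable def Kker (ξ z : ℂ) : ℂ := 1 / (ξ - z) - ξ / (1 - ξ * z)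

/-- `f ∈ K`: `f = K_μ` on the unit disk for some complex Borel measure `μ` on the unit
circle, encoded by its polar decomposition `dμ = w dP` with `P` a finite positive measure
concentrated on the circle and `w` an integrable density. -/
def MemK (f : ℂ → ℂ) : Prop :=
  ∃ (P : Measure ℂ) (w : ℂ → ℂ), IsFiniteMeasure P ∧ (∀ᵐ ξ ∂P, ‖ξ‖ = 1) ∧
    Integrable w P ∧ ∀ z ∈ ball (0 : ℂ) 1, f z = ∫ ξ, Kker ξ z * w ξ ∂P

lemma auxDenNe (a : ℝ) (ha : |a| < 1) (ξ : ℂ) (hξ : ‖ξ‖ ≤ 1) :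
    (1 : ℂ) - ξ * a ≠ 0 := by
  intro h
  have h1 : ξ * a = 1 := by linear_combination -h
  have h2 : ‖ξ * (a:ℂ)‖ = 1 := by rw [h1]; simp
  rw [norm_mul, Complex.norm_real, Real.norm_eq_abs] at h2
  nlinarith [abs_nonneg a, norm_nonneg ξ]

lemma auxNormMob (a : ℝ) (ha : |a| < 1) (ξ : ℂ) (hξ : ‖ξ‖ = 1) :
    ‖(ξ - a) / (1 - ξ * a)‖ = 1 := by
  have hden : (1 : ℂ) - ξ * a ≠ 0 := auxDenNe a ha ξ hξ.le
  have habs : ‖ξ‖ = 1 := hξ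
  have hconj : ξ * (starRingEnd ℂ) ξ = 1 := by
    rw [Complex.mul_conj, Complex.normSq_eq_norm_sq, habs]; norm_num
  have h1 : ξ - a = ξ * (1 - (starRingEnd ℂ) ξ * a) := by
    linear_combination (a : ℂ) * hconj
  have h2 : (1 : ℂ) - (starRingEnd ℂ) ξ * a = (starRingEnd ℂ) (1 - ξ * a) := by
    simp [map_sub, map_mul, Complex.conj_ofReal]
  rw [norm_div, h1, norm_mul, hξ, one_mul, h2, RCLike.norm_conj,
    div_self (norm_ne_zero_iff.2 hden)]

lemma auxMobBall (a : ℝ) (ha : |a| < 1) (z : ℂ) (hz : ‖z‖ < 1) :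
    ‖(z + a) / (1 + z * a)‖ < 1 := by
  have hden : (1 : ℂ) + z * a ≠ 0 := by
    have h := auxDenNe (-a) (by rwa [abs_neg]) z hz.le
    rw [Complex.ofReal_neg] at h
    intro hc; exact h (by linear_combination hc)
  have e : ∀ w : ℂ, ‖w‖ ^ 2 = Complex.normSq w := fun w => by
    rw [Complex.sq_norm]
  have hz2 : z.re ^ 2 + z.im ^ 2 < 1 := by
    have h1 : ‖z‖ ^ 2 < 1 := by nlinarith [norm_nonneg z]
    rw [e] at h1; simpa [Complex.normSq_apply, sq] using h1
  have ha2 : a ^ 2 < 1 := by have := abs_lt.1 ha; nlinarith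
  rw [norm_div, div_lt_one (norm_pos_iff.2 hden)]
  have key : ‖z + (a:ℂ)‖ ^ 2 < ‖1 + z * (a:ℂ)‖ ^ 2 := by
    rw [e, e]
    simp only [Complex.normSq_apply, Complex.add_re, Complex.add_im, Complex.mul_re,
      Complex.mul_im, Complex.ofReal_re, Complex.ofReal_im, Complex.one_re, Complex.one_im]
    nlinarith [mul_pos (by linarith : (0:ℝ) < 1 - a ^ 2)
      (by linarith : (0:ℝ) < 1 - (z.re ^ 2 + z.im ^ 2))]
  exact lt_of_pow_lt_pow_left₀ 2 (norm_nonneg _) key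

lemma auxInv (a : ℝ) (ha : |a| < 1) (ξ : ℂ) (hξ : ‖ξ‖ = 1) :
    ((ξ - a) / (1 - ξ * a) + a) / (1 + ((ξ - a) / (1 - ξ * a)) * a) = ξ := by
  have hden : (1 : ℂ) - ξ * a ≠ 0 := auxDenNe a ha ξ hξ.le
  have ha2 : (1 : ℂ) - (a:ℂ) ^ 2 ≠ 0 := by
    intro h
    have h2 : a ^ 2 = 1 := by exact_mod_cast (by linear_combination -h : ((a:ℝ)^2 : ℂ) = 1)
    have := abs_lt.1 ha; nlinarith
  have hden2 : (1 : ℂ) + (ξ - a) / (1 - ξ * a) * a ≠ 0 := by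
    have : (1 : ℂ) + (ξ - a) / (1 - ξ * a) * a = (1 - (a:ℂ)^2) / (1 - ξ * a) := by
      field_simp; ring
    rw [this]
    exact div_ne_zero ha2 hden
  field_simp
  linear_combination ξ * (mul_inv_cancel₀ ha2)

lemma auxKer (a : ℝ) (ha : |a| < 1) (ξ z : ℂ) (hξ : ‖ξ‖ = 1) (hz : ‖z‖ < 1) :
    Kker ((ξ - a) / (1 - ξ * a)) z =
      Kker ξ ((z + a) / (1 + z * a)) *
        ((1 * (1 + z * a) - (z + a) * (1 * a)) / (1 + z * a) ^ 2) := by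
  have hξa : (1 : ℂ) - ξ * a ≠ 0 := auxDenNe a ha ξ hξ.le
  have hza : (1 : ℂ) + z * a ≠ 0 := by
    have h := auxDenNe (-a) (by rwa [abs_neg]) z hz.le
    rw [Complex.ofReal_neg] at h
    intro hc; exact h (by linear_combination hc)
  have hηn : ‖(ξ - a) / (1 - ξ * a)‖ = 1 := auxNormMob a ha ξ hξ
  have hφn : ‖(z + a) / (1 + z * a)‖ < 1 := auxMobBall a ha z hz
  have d1 : (ξ - a) / (1 - ξ * a) - z ≠ 0 := by
    intro h; rw [sub_eq_zero] at h; rw [h] at hηn; exact absurd hηn (ne_of_lt hz)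
  have d2 : (1 : ℂ) - (ξ - a) / (1 - ξ * a) * z ≠ 0 := by
    intro h
    have h2 : ‖(ξ - a) / (1 - ξ * a) * z‖ = 1 := by
      rw [show (ξ - a) / (1 - ξ * a) * z = 1 from by linear_combination -h]; simp
    rw [norm_mul, hηn, one_mul] at h2
    exact absurd h2 (ne_of_lt hz)
  have d3 : ξ - (z + a) / (1 + z * a) ≠ 0 := by
    intro h; rw [sub_eq_zero] at h; rw [← h] at hφn; exact absurd hξ (ne_of_lt hφn)
  have d4 : (1 : ℂ) - ξ * ((z + a) / (1 + z * a)) ≠ 0 := by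
    intro h
    have h2 : ‖ξ * ((z + a) / (1 + z * a))‖ = 1 := by
      rw [show ξ * ((z + a) / (1 + z * a)) = 1 from by linear_combination -h]; simp
    rw [norm_mul, hξ, one_mul] at h2
    exact absurd h2 (ne_of_lt hφn)
  have e1 : (ξ - a) / (1 - ξ * a) - z = ((ξ - a) - z * (1 - ξ * a)) / (1 - ξ * a) := by
    field_simp <;> ring
  have e2 : (1 : ℂ) - (ξ - a) / (1 - ξ * a) * z
      = ((1 - ξ * a) - (ξ - a) * z) / (1 - ξ * a) := by field_simp <;> ring
  have e3 : ξ - (z + a) / (1 + z * a) = (ξ * (1 + z * a) - (z + a)) / (1 + z * a) := by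
    field_simp <;> ring
  have e4 : (1 : ℂ) - ξ * ((z + a) / (1 + z * a))
      = ((1 + z * a) - ξ * (z + a)) / (1 + z * a) := by field_simp <;> ring
  have D1 : (ξ - a) - z * (1 - ξ * a) ≠ 0 := by
    intro h; exact d1 (by rw [e1, h, zero_div])
  have D2 : (1 - ξ * a) - (ξ - a) * z ≠ 0 := by
    intro h; exact d2 (by rw [e2, h, zero_div])
  have D3 : ξ * (1 + z * a) - (z + a) ≠ 0 := by
    intro h; exact d3 (by rw [e3, h, zero_div])
  have D4 : (1 + z * a) - ξ * (z + a) ≠ 0 := by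
    intro h; exact d4 (by rw [e4, h, zero_div])
  rw [Kker, Kker, e1, e2, e3, e4]
  rw [one_div_div, div_div_div_cancel_right₀ hξa, one_div_div, div_div_eq_mul_div, div_sub_div _ _ D1 D2, div_sub_div _ _ D3 D4, div_mul_div_comm, div_eq_div_iff (mul_ne_zero D1 D2) (mul_ne_zero (mul_ne_zero D3 D4) (pow_ne_zero 2 hza))]
  ring

theorem stmt0 (a : ℝ) (ha : -1 < a) (ha' : a < 1) (f : ℂ → ℂ) (hf : MemK f) :
    MemK (fun z => f ((z + a) / (1 + z * a)) *
      deriv (fun u : ℂ => (u + a) / (1 + u * a)) z) := by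
  obtain ⟨P, w, hPfin, hPcirc, hw, hfeq⟩ := hf
  have haa : |a| < 1 := abs_lt.2 ⟨ha, ha'⟩
  -- measurable versions
  set g : ℂ → ℂ := fun ξ => (ξ - a) / (1 - ξ * a) with hg
  set φ : ℂ → ℂ := fun z => (z + a) / (1 + z * a) with hφ
  have hgm : Measurable g := by
    apply Measurable.div
    · exact measurable_id.sub_const _
    · exact measurable_const.sub (measurable_id.mul_const _)
  have hφm : Measurable φ := by
    apply Measurable.div
    · exact measurable_id.add_const _
    · exact measurable_const.add (measurable_id.mul_const _)
  set w₀ : ℂ → ℂ := hw.1.mk w with hw₀def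
  have hw₀m : StronglyMeasurable w₀ := hw.1.stronglyMeasurable_mk
  have hww₀ : w =ᵐ[P] w₀ := hw.1.ae_eq_mk
  have hw₀ : Integrable w₀ P := hw.congr hww₀
  set w' : ℂ → ℂ := fun η => w₀ (φ η) with hw'
  have hw'm : StronglyMeasurable w' := hw₀m.comp_measurable hφm
  refine ⟨P.map g, w', ?_, ?_, ?_, ?_⟩
  · exact ⟨by rw [Measure.map_apply hgm MeasurableSet.univ]; exact measure_lt_top P _⟩
  · rw [MeasureTheory.ae_map_iff hgm.aemeasurable
      (show MeasurableSet {η : ℂ | ‖η‖ = 1} from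
        measurable_norm (measurableSet_singleton 1))]
    filter_upwards [hPcirc] with ξ hξ
    exact auxNormMob a haa ξ hξ
  · rw [integrable_map_measure hw'm.aestronglyMeasurable hgm.aemeasurable]
    apply hw₀.congr
    filter_upwards [hPcirc] with ξ hξ
    show w₀ ξ = w₀ (φ (g ξ))
    rw [show φ (g ξ) = ξ from auxInv a haa ξ hξ]
  · intro z hz
    rw [mem_ball_zero_iff] at hz
    have hza : (1 : ℂ) + z * a ≠ 0 := by
      have h := auxDenNe (-a) (by rwa [abs_neg]) z hz.le
      rw [Complex.ofReal_neg] at h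
      intro hc; exact h (by linear_combination hc)
    have hd : HasDerivAt (fun u : ℂ => (u + a) / (1 + u * a))
        ((1 * (1 + z * a) - (z + a) * (1 * a)) / (1 + z * a) ^ 2) z := by
      exact (((hasDerivAt_id z).add_const _).div
        (((hasDerivAt_id z).mul_const _).const_add 1) hza)
    have hD : deriv φ z
        = (1 * (1 + z * a) - (z + a) * (1 * a)) / (1 + z * a) ^ 2 := hd.deriv
    set D : ℂ := (1 * (1 + z * a) - (z + a) * (1 * a)) / (1 + z * a) ^ 2 with hDdef
    have hKm : AEStronglyMeasurable (fun η => Kker η z * w' η) (P.map g) := by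
      apply StronglyMeasurable.aestronglyMeasurable
      apply StronglyMeasurable.mul _ hw'm
      apply Measurable.stronglyMeasurable
      unfold Kker
      apply Measurable.sub
      · exact measurable_const.div (measurable_id.sub_const _)
      · exact measurable_id.div (measurable_const.sub (measurable_id.mul_const _))
    rw [integral_map hgm.aemeasurable hKm]
    have hcongr : ∀ᵐ ξ ∂P, Kker (g ξ) z * w' (g ξ) = D * (Kker ξ (φ z) * w ξ) := by
      filter_upwards [hPcirc, hww₀] with ξ hξ hwξ
      have h1 : w' (g ξ) = w ξ := by
        show w₀ (φ (g ξ)) = w ξ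
        rw [show φ (g ξ) = ξ from auxInv a haa ξ hξ, ← hwξ]
      rw [h1, show Kker (g ξ) z = Kker ξ (φ z) * D from auxKer a haa ξ z hξ hz]
      ring
    rw [integral_congr_ae hcongr, integral_const_mul]
    have hφball : φ z ∈ ball (0 : ℂ) 1 := by
      rw [mem_ball_zero_iff]; exact auxMobBall a haa z hz
    rw [← hfeq (φ z) hφball]
    show f (φ z) * deriv φ z = D * f (φ z)
    rw [hD, mul_comm]
end

section
/- If f ∈ J, i.e. f = J_μ for some complex Borel measure μ on the unit circle, then f' belongs to the class F_1, i.e. f'(z) = ∫_T 1/(1 - conj(ξ)z) dν(ξ) for some complex Borel measure ν on T. -/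
open MeasureTheory Metric Complex

/-- The logarithmic kernel `log((1 - ξ z)/(1 - conj ξ z))` (principal branch, which is the
analytic branch vanishing at `z = 0` when `‖ξ‖ = 1`, `‖z‖ < 1`). -/
noncomputable def Jker (ξ z : ℂ) : ℂ :=
  Complex.log ((1 - ξ * z) / (1 - (starRingEnd ℂ) ξ * z))

/-- `f ∈ J`: `f = J_μ` on the unit disk for some complex Borel measure on the unit circle,
encoded by a finite positive measure `P` concentrated on the circle and an integrable
density `w` (`dμ = w dP`). -/
def MemJ (f : ℂ → ℂ) : Prop :=
  ∃ (P : Measure ℂ) (w : ℂ → ℂ), IsFiniteMeasure P ∧ (∀ᵐ ξ ∂P, ‖ξ‖ = 1) ∧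
    Integrable w P ∧ ∀ z ∈ ball (0 : ℂ) 1, f z = ∫ ξ, Jker ξ z * w ξ ∂P

/-- `g ∈ F₁`: `g(z) = ∫ (1 - conj ξ · z)⁻¹ dν(ξ)` for some complex Borel measure `ν` on
the circle. -/
def MemF1 (g : ℂ → ℂ) : Prop :=
  ∃ (P : Measure ℂ) (w : ℂ → ℂ), IsFiniteMeasure P ∧ (∀ᵐ ξ ∂P, ‖ξ‖ = 1) ∧
    Integrable w P ∧
    ∀ z ∈ ball (0 : ℂ) 1, g z = ∫ ξ, (1 - (starRingEnd ℂ) ξ * z)⁻¹ * w ξ ∂P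

/-! ### Auxiliary lemmas -/

lemma aux_lb {ξ z : ℂ} (hξ : ‖ξ‖ = 1) {r : ℝ} (hr : ‖z‖ ≤ r) : 1 - r ≤ ‖1 - ξ * z‖ := by
  have h1 : ‖ξ * z‖ = ‖z‖ := by rw [norm_mul, hξ, one_mul]
  calc 1 - r ≤ ‖(1 : ℂ)‖ - ‖ξ * z‖ := by rw [norm_one, h1]; linarith
    _ ≤ ‖1 - ξ * z‖ := norm_sub_norm_le _ _

lemma aux_ub {ξ z : ℂ} (hξ : ‖ξ‖ = 1) {r : ℝ} (hr : ‖z‖ ≤ r) : ‖1 - ξ * z‖ ≤ 1 + r := by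
  have h1 : ‖ξ * z‖ = ‖z‖ := by rw [norm_mul, hξ, one_mul]
  calc ‖1 - ξ * z‖ ≤ ‖(1 : ℂ)‖ + ‖ξ * z‖ := norm_sub_le _ _
    _ ≤ 1 + r := by rw [norm_one, h1]; linarith

lemma aux_ne {ξ z : ℂ} (hξ : ‖ξ‖ = 1) (hz : ‖z‖ < 1) : 1 - ξ * z ≠ 0 := by
  intro h
  have := aux_lb hξ (le_refl ‖z‖)
  rw [h, norm_zero] at this
  linarith

lemma aux_re {ξ z : ℂ} (hξ : ‖ξ‖ = 1) (hz : ‖z‖ < 1) : 0 < (1 - ξ * z).re := by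
  have h1 : (ξ * z).re ≤ ‖ξ * z‖ := Complex.re_le_norm _
  have h2 : ‖ξ * z‖ = ‖z‖ := by rw [norm_mul, hξ, one_mul]
  have : (1 - ξ * z).re = 1 - (ξ * z).re := by simp
  rw [this]
  linarith

lemma norm_conj_one {ξ : ℂ} (hξ : ‖ξ‖ = 1) : ‖(starRingEnd ℂ) ξ‖ = 1 := by
  rwa [RCLike.norm_conj]

lemma aux_slit {ξ z : ℂ} (hξ : ‖ξ‖ = 1) (hz : ‖z‖ < 1) :
    (1 - ξ * z) / (1 - (starRingEnd ℂ) ξ * z) ∈ Complex.slitPlane := by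
  have ha := aux_re hξ hz
  have hb := aux_re (norm_conj_one hξ) hz
  have hbne := aux_ne (norm_conj_one hξ) hz
  by_contra h
  rw [Complex.mem_slitPlane_iff] at h
  push_neg at h
  obtain ⟨h1, h2⟩ := h
  set q := (1 - ξ * z) / (1 - (starRingEnd ℂ) ξ * z) with hq
  have heq : (1 - ξ * z) = q * (1 - (starRingEnd ℂ) ξ * z) := by
    rw [hq, div_mul_cancel₀ _ hbne]
  have hre : (1 - ξ * z).re
      = q.re * (1 - (starRingEnd ℂ) ξ * z).re - q.im * (1 - (starRingEnd ℂ) ξ * z).im := by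
    rw [heq, Complex.mul_re]
  rw [hre, h2] at ha
  nlinarith

/-- Derivative of the kernel in `z`. -/
lemma jker_hasDerivAt {ξ z : ℂ} (hξ : ‖ξ‖ = 1) (hz : ‖z‖ < 1) :
    HasDerivAt (fun w => Jker ξ w)
      ((starRingEnd ℂ) ξ / (1 - (starRingEnd ℂ) ξ * z) - ξ / (1 - ξ * z)) z := by
  have ha := aux_ne hξ hz
  have hb := aux_ne (norm_conj_one hξ) hz
  have h1 : HasDerivAt (fun w : ℂ => 1 - ξ * w) (-ξ) z := by
    simpa using ((hasDerivAt_id z).const_mul ξ).const_sub 1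
  have h2 : HasDerivAt (fun w : ℂ => 1 - (starRingEnd ℂ) ξ * w) (-((starRingEnd ℂ) ξ)) z := by
    simpa using ((hasDerivAt_id z).const_mul ((starRingEnd ℂ) ξ)).const_sub 1
  have hq := h1.div h2 hb
  have hlog := hq.clog (aux_slit hξ hz)
  have : Jker ξ = fun w => Complex.log ((1 - ξ * w) / (1 - (starRingEnd ℂ) ξ * w)) := rfl
  rw [this]
  convert hlog using 1
  · rfl
  simp only [Pi.div_apply]
  have ha' : 1 - z * ξ ≠ 0 := by rwa [mul_comm]
  have hb' : 1 - z * (starRingEnd ℂ) ξ ≠ 0 := by rwa [mul_comm]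
  field_simp
  ring

lemma abs_log_le {x C : ℝ} (hC : 1 ≤ C) (h1 : C⁻¹ ≤ x) (h2 : x ≤ C) :
    |Real.log x| ≤ Real.log C := by
  have hCpos : (0 : ℝ) < C := by linarith
  have hx : 0 < x := lt_of_lt_of_le (by positivity) h1
  rw [abs_le]
  constructor
  · rw [← Real.log_inv]
    exact (Real.log_le_log_iff (by positivity) hx).2 h1
  · exact (Real.log_le_log_iff hx hCpos).2 h2

lemma jker_norm_le {ξ z : ℂ} (hξ : ‖ξ‖ = 1) {r : ℝ} (hr0 : 0 ≤ r) (hr1 : r < 1)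
    (hzr : ‖z‖ ≤ r) : ‖Jker ξ z‖ ≤ Real.log (2 / (1 - r)) + Real.pi := by
  have hz : ‖z‖ < 1 := lt_of_le_of_lt hzr hr1
  set q := (1 - ξ * z) / (1 - (starRingEnd ℂ) ξ * z) with hqdef
  have ha1 := aux_lb hξ hzr
  have ha2 := aux_ub hξ hzr
  have hb1 := aux_lb (norm_conj_one hξ) hzr
  have hb2 := aux_ub (norm_conj_one hξ) hzr
  have hbpos : (0 : ℝ) < ‖1 - (starRingEnd ℂ) ξ * z‖ := by linarith
  have habs : ‖q‖ = ‖1 - ξ * z‖ / ‖1 - (starRingEnd ℂ) ξ * z‖ := by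
    rw [hqdef, norm_div]
  have hC : (1 : ℝ) ≤ 2 / (1 - r) := by
    rw [le_div_iff₀ (by linarith)]; linarith
  have hql : (2 / (1 - r))⁻¹ ≤ ‖q‖ := by
    rw [habs]
    have : (2 / (1 - r))⁻¹ = (1 - r) / 2 := by field_simp
    rw [this, div_le_div_iff₀ (by linarith) hbpos]
    nlinarith
  have hqu : ‖q‖ ≤ 2 / (1 - r) := by
    rw [habs, div_le_div_iff₀ hbpos (by linarith)]
    nlinarith
  have h1 : ‖Jker ξ z‖ ≤ |(Complex.log q).re| + |(Complex.log q).im| := by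
    rw [Jker, ← hqdef]
    exact Complex.norm_le_abs_re_add_abs_im _
  have h2 : |(Complex.log q).re| ≤ Real.log (2 / (1 - r)) := by
    rw [Complex.log_re]
    exact abs_log_le hC hql hqu
  have h3 : |(Complex.log q).im| ≤ Real.pi := by
    rw [Complex.log_im]
    exact Complex.abs_arg_le_pi _
  linarith

lemma kernel_bound {ξ z : ℂ} (hξ : ‖ξ‖ = 1) {r : ℝ} (hr1 : r < 1) (hzr : ‖z‖ ≤ r) :
    ‖(starRingEnd ℂ) ξ / (1 - (starRingEnd ℂ) ξ * z) - ξ / (1 - ξ * z)‖ ≤ 2 / (1 - r) := by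
  have ha := aux_lb hξ hzr
  have hb := aux_lb (norm_conj_one hξ) hzr
  have hpos : (0 : ℝ) < 1 - r := by linarith
  have key : ∀ η : ℂ, ‖η‖ = 1 → ‖η / (1 - η * z)‖ ≤ 1 / (1 - r) := by
    intro η hη
    have h1 := aux_lb hη hzr
    rw [norm_div, hη]
    exact div_le_div_of_nonneg_left one_pos.le hpos h1 |>.trans_eq rfl |>.trans le_rfl
  have h1 := key _ (norm_conj_one hξ)
  have h2 := key _ hξ
  calc ‖(starRingEnd ℂ) ξ / (1 - (starRingEnd ℂ) ξ * z) - ξ / (1 - ξ * z)‖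
      ≤ ‖(starRingEnd ℂ) ξ / (1 - (starRingEnd ℂ) ξ * z)‖ + ‖ξ / (1 - ξ * z)‖ :=
        norm_sub_le _ _
    _ ≤ 1 / (1 - r) + 1 / (1 - r) := add_le_add h1 h2
    _ = 2 / (1 - r) := by ring

theorem stmt4 (f : ℂ → ℂ) (hf : MemJ f) : MemF1 (deriv f) := by
  classical
  obtain ⟨P, w0, hfin, hcirc, hint0, hrep0⟩ := hf
  haveI := hfin
  set w : ℂ → ℂ := hint0.1.mk w0 with hw_def
  have hwsm : StronglyMeasurable w := hint0.1.stronglyMeasurable_mk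
  have hwm : Measurable w := hwsm.measurable
  have hweq : w0 =ᵐ[P] w := hint0.1.ae_eq_mk
  have hint : Integrable w P := hint0.congr hweq
  have hconj : Measurable fun ξ : ℂ => (starRingEnd ℂ) ξ :=
    (continuous_star.measurable : Measurable (star : ℂ → ℂ))
  have hrep : ∀ z ∈ ball (0:ℂ) 1, f z = ∫ ξ, Jker ξ z * w ξ ∂P := by
    intro z hz
    rw [hrep0 z hz]
    exact integral_congr_ae (hweq.mono fun ξ h => by dsimp only; rw [h])
  have hmeasJ : ∀ z : ℂ, Measurable fun ξ => Jker ξ z := fun z =>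
    Complex.measurable_log.comp
      ((measurable_const.sub (measurable_id.mul_const z)).div
        (measurable_const.sub (hconj.mul_const z)))
  have hmeasK : ∀ z : ℂ, Measurable fun ξ : ℂ =>
      (starRingEnd ℂ) ξ / (1 - (starRingEnd ℂ) ξ * z) - ξ / (1 - ξ * z) := fun z =>
    (hconj.div (measurable_const.sub (hconj.mul_const z))).sub
      (measurable_id.div (measurable_const.sub (measurable_id.mul_const z)))
  -- derivative of f on the ball via differentiation under the integral sign
  have key : ∀ z ∈ ball (0:ℂ) 1, HasDerivAt f
      (∫ ξ, ((starRingEnd ℂ) ξ / (1 - (starRingEnd ℂ) ξ * z) - ξ / (1 - ξ * z)) * w ξ ∂P) z := by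
    intro z₀ hz₀'
    have hz₀ : ‖z₀‖ < 1 := mem_ball_zero_iff.1 hz₀'
    set ε : ℝ := (1 - ‖z₀‖) / 2 with hεdef
    have hεpos : 0 < ε := by rw [hεdef]; linarith
    set r : ℝ := ‖z₀‖ + ε with hrdef
    have hr1 : r < 1 := by rw [hrdef, hεdef]; linarith
    have hball : ∀ z ∈ ball z₀ ε, ‖z‖ ≤ r := by
      intro z hz
      have h1 : ‖z - z₀‖ < ε := mem_ball_iff_norm.1 hz
      have h2 : ‖z‖ ≤ ‖z₀‖ + ‖z - z₀‖ := by
        simpa using norm_add_le z₀ (z - z₀)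
      rw [hrdef]; linarith
    have Hd := hasDerivAt_integral_of_dominated_loc_of_deriv_le (μ := P)
      (F := fun z ξ => Jker ξ z * w ξ)
      (F' := fun z ξ => ((starRingEnd ℂ) ξ / (1 - (starRingEnd ℂ) ξ * z) - ξ / (1 - ξ * z)) * w ξ)
      (bound := fun ξ => 2 / (1 - r) * ‖w ξ‖) (x₀ := z₀) (ball_mem_nhds z₀ hεpos)
      (Filter.Eventually.of_forall fun z =>
        ((hmeasJ z).mul hwm).aestronglyMeasurable)
      (hint.bdd_mul (hmeasJ z₀).aestronglyMeasurable
        (hcirc.mono fun ξ hξ => jker_norm_le hξ (norm_nonneg z₀) hz₀ le_rfl))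
      ((hmeasK z₀).mul hwm).aestronglyMeasurable
      (hcirc.mono fun ξ hξ z hz => by
        rw [norm_mul]
        exact mul_le_mul_of_nonneg_right (kernel_bound hξ hr1 (hball z hz)) (norm_nonneg _))
      (hint.norm.const_mul _)
      (hcirc.mono fun ξ hξ z hz =>
        (jker_hasDerivAt hξ (lt_of_le_of_lt (hball z hz) hr1)).mul_const (w ξ))
    have hev : f =ᶠ[nhds z₀] fun z => ∫ ξ, Jker ξ z * w ξ ∂P :=
      Filter.eventuallyEq_of_mem (isOpen_ball.mem_nhds hz₀') fun z hz => hrep z hz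
    exact Hd.2.congr_of_eventuallyEq hev
  -- construction of the representing measure for the derivative
  set Q : Measure ℂ := P.map (fun ξ => (starRingEnd ℂ) ξ) with hQdef
  haveI : IsFiniteMeasure Q := by
    refine ⟨?_⟩
    rw [hQdef, Measure.map_apply hconj MeasurableSet.univ]
    exact measure_lt_top P _
  set P2 : Measure ℂ := P + Q with hP2def
  have hPle : P ≪ P2 := Measure.absolutelyContinuous_of_le (Measure.le_add_right le_rfl)
  have hQle : Q ≪ P2 := Measure.absolutelyContinuous_of_le (Measure.le_add_left le_rfl)
  set w1 : ℂ → ℂ := fun ξ => (starRingEnd ℂ) ξ * w ξ with hw1def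
  set w2 : ℂ → ℂ := fun η => -((starRingEnd ℂ) η) * w ((starRingEnd ℂ) η) with hw2def
  have hw1m : Measurable w1 := hconj.mul hwm
  have hw2m : Measurable w2 := hconj.neg.mul (hwm.comp hconj)
  have hw1i : Integrable w1 P :=
    hint.bdd_mul hconj.aestronglyMeasurable
      (hcirc.mono fun ξ h => le_of_eq (norm_conj_one h))
  have hs1 : MeasurableSet {x : ℂ | ‖x‖ = 1} := measurable_norm (measurableSet_singleton (1:ℝ))
  have hcircQ : ∀ᵐ η ∂Q, ‖η‖ = 1 :=
    (ae_map_iff (p := fun x : ℂ => ‖x‖ = 1) hconj.aemeasurable hs1).2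
      (hcirc.mono fun ξ h => norm_conj_one h)
  have hcirc2 : ∀ᵐ ξ ∂P2, ‖ξ‖ = 1 := by
    rw [hP2def, ae_add_measure_iff]
    exact ⟨hcirc, hcircQ⟩
  have hw2i : Integrable w2 Q := by
    rw [hQdef, integrable_map_measure hw2m.aestronglyMeasurable hconj.aemeasurable]
    have hco : (w2 ∘ fun ξ => (starRingEnd ℂ) ξ) = fun ξ => -ξ * w ξ := by
      funext ξ; simp [hw2def, Complex.conj_conj]
    rw [hco]
    exact hint.bdd_mul (c := 1) measurable_id.neg.aestronglyMeasurable
      (hcirc.mono fun ξ h => by simp [h])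
  set wf : ℂ → ℂ := fun ξ =>
    (P.rnDeriv P2 ξ).toReal • w1 ξ + (Q.rnDeriv P2 ξ).toReal • w2 ξ with hwfdef
  have hwfi : Integrable wf P2 :=
    ((MeasureTheory.integrable_rnDeriv_smul_iff hPle).2 hw1i).add
      ((MeasureTheory.integrable_rnDeriv_smul_iff hQle).2 hw2i)
  refine ⟨P2, wf, inferInstance, hcirc2, hwfi, ?_⟩
  intro z hz
  have hz1 : ‖z‖ < 1 := mem_ball_zero_iff.1 hz
  have hkb : ∀ ξ : ℂ, ‖ξ‖ = 1 → ‖(1 - (starRingEnd ℂ) ξ * z)⁻¹‖ ≤ (1 - ‖z‖)⁻¹ := by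
    intro ξ h
    rw [norm_inv]
    exact inv_anti₀ (by linarith) (aux_lb (norm_conj_one h) le_rfl)
  have hkm : Measurable fun ξ : ℂ => (1 - (starRingEnd ℂ) ξ * z)⁻¹ :=
    (measurable_const.sub (hconj.mul_const z)).inv
  have hI1 : Integrable (fun ξ => (1 - (starRingEnd ℂ) ξ * z)⁻¹ * w1 ξ) P :=
    hw1i.bdd_mul hkm.aestronglyMeasurable (hcirc.mono fun ξ h => hkb ξ h)
  have hI2 : Integrable (fun ξ => (1 - ξ * z)⁻¹ * (-ξ * w ξ)) P := by
    have hgm : Measurable fun ξ : ℂ => (1 - ξ * z)⁻¹ * -ξ :=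
      (measurable_const.sub (measurable_id.mul_const z)).inv.mul measurable_id.neg
    have hgb : ∀ᵐ ξ ∂P, ‖(1 - ξ * z)⁻¹ * -ξ‖ ≤ (1 - ‖z‖)⁻¹ :=
      hcirc.mono fun ξ h => by
        rw [norm_mul, norm_neg, h, mul_one, norm_inv]
        exact inv_anti₀ (by linarith) (aux_lb h le_rfl)
    have h := hint.bdd_mul (f := fun ξ : ℂ => (1 - ξ * z)⁻¹ * -ξ)
      hgm.aestronglyMeasurable hgb
    simpa [mul_assoc] using h
  have hI2Q : Integrable (fun η => (1 - (starRingEnd ℂ) η * z)⁻¹ * w2 η) Q :=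
    hw2i.bdd_mul hkm.aestronglyMeasurable (hcircQ.mono fun η h => hkb η h)
  calc deriv f z
      = ∫ ξ, ((starRingEnd ℂ) ξ / (1 - (starRingEnd ℂ) ξ * z) - ξ / (1 - ξ * z)) * w ξ ∂P :=
        (key z hz).deriv
    _ = ∫ ξ, ((1 - (starRingEnd ℂ) ξ * z)⁻¹ * w1 ξ + (1 - ξ * z)⁻¹ * (-ξ * w ξ)) ∂P := by
        refine integral_congr_ae (Filter.Eventually.of_forall fun ξ => ?_)
        dsimp only
        rw [div_eq_mul_inv, div_eq_mul_inv]
        ring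
    _ = (∫ ξ, (1 - (starRingEnd ℂ) ξ * z)⁻¹ * w1 ξ ∂P)
        + ∫ ξ, (1 - ξ * z)⁻¹ * (-ξ * w ξ) ∂P := integral_add hI1 hI2
    _ = (∫ ξ, (1 - (starRingEnd ℂ) ξ * z)⁻¹ * w1 ξ ∂P)
        + ∫ η, (1 - (starRingEnd ℂ) η * z)⁻¹ * w2 η ∂Q := by
        congr 1
        rw [hQdef, integral_map (f := fun η => (1 - (starRingEnd ℂ) η * z)⁻¹ * w2 η) hconj.aemeasurable
          ((hkm.mul hw2m).aestronglyMeasurable)]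
        refine integral_congr_ae (Filter.Eventually.of_forall fun ξ => ?_)
        simp [hw2def, Complex.conj_conj]
    _ = ∫ ξ, (1 - (starRingEnd ℂ) ξ * z)⁻¹ * wf ξ ∂P2 := by
        have e1 : ∫ ξ, (1 - (starRingEnd ℂ) ξ * z)⁻¹ * wf ξ ∂P2
            = ∫ ξ, ((P.rnDeriv P2 ξ).toReal • ((1 - (starRingEnd ℂ) ξ * z)⁻¹ * w1 ξ)
              + (Q.rnDeriv P2 ξ).toReal • ((1 - (starRingEnd ℂ) ξ * z)⁻¹ * w2 ξ)) ∂P2 := by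
          refine integral_congr_ae (Filter.Eventually.of_forall fun ξ => ?_)
          dsimp only
          rw [mul_add, mul_smul_comm, mul_smul_comm]
        rw [e1, integral_add ((MeasureTheory.integrable_rnDeriv_smul_iff hPle).2 hI1)
            ((MeasureTheory.integrable_rnDeriv_smul_iff hQle).2 hI2Q),
          MeasureTheory.integral_rnDeriv_smul hPle, MeasureTheory.integral_rnDeriv_smul hQle]
end
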